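/- Let L be a Lie algebra over a field of characteristic zero with elements x_1, x_2, x_3, x_4, x_5 such that [x_5,x_2] = -x_1, [x_5,x_3] = -x_2, and [x_5,x_4] = -x_3, and all other brackets among x_1, ..., x_5 are 0 (the Lie algebra 𝔫_{5,5}). Then for all nonnegative integers j, k, l, m, n, p, q, r, s, t, in the universal enveloping algebra U(L) one has (x_1^j x_2^k x_3^l x_4^m x_5^n)(x_1^p x_2^q x_3^r x_4^s x_5^t) = \sum_{\alpha=0}^{\min\{n,q\}} \sum_{\beta_1,\beta_2 \ge 0,\ \beta_1+\beta_2 \le r,\ \beta_1+2\beta_2 \le n-\alpha} \sum_{\gamma_1,\gamma_2,\gamma_3 \ge 0,\ \gamma_1+\gamma_2+\gamma_3 \le s,\ \gamma_1+2\gamma_2+3\gamma_3 \le n-\alpha-\beta_1-2\beta_2} \binom{n}{\alpha} \binom{q}{\alpha} \binom{r}{\beta_1+\beta_2} \binom{n-\alpha}{\beta_1+2\beta_2} \binom{\beta_1+\beta_2}{\beta_1} \binom{s}{\gamma_1+\gamma_2+\gamma_3} \binom{n-\alpha-\beta_1-2\beta_2}{\gamma_1+2\gamma_2+3\gamma_3}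 \alpha! \frac{(\beta_1+2\beta_2)!}{2^{\beta_2}} \frac{(\gamma_1+\gamma_2+\gamma_3)!\,(\gamma_1+2\gamma_2+3\gamma_3)!}{(2!)^{\gamma_2}(3!)^{\gamma_3}\, \gamma_3!\, \gamma_2!\, \gamma_1!} (-1)^{\alpha+\beta_1+\gamma_1+\gamma_3} \, x_1^{j+p+\alpha+\beta_2+\gamma_3} x_2^{k+q-\alpha+\beta_1+\gamma_2} x_3^{l+r-\beta_1-\beta_2+\gamma_1} x_4^{m+s-\gamma_1-\gamma_2-\gamma_3} x_5^{n+t-\alpha-\beta_1-2\beta_2-\gamma_1-2\gamma_2-3\gamma_3}. -/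

import Mathlib

open UniversalEnvelopingAlgebra

open Finset

namespace Stmt15Aux

theorem sum_shift {M : Type*} [AddCommGroup M] (N : ℕ) (f g : ℕ → M)
    (hfg : ∀ i, f i = g (i + 1)) (h0 : g 0 = 0) (hN : g N = 0) :
    ∑ i ∈ range N, f i = ∑ i ∈ range N, g i := by
  have h1 := Finset.sum_range_succ' g N
  have h2 := Finset.sum_range_succ g N
  rw [h0, add_zero] at h1
  rw [hN, add_zero] at h2
  calc ∑ i ∈ range N, f i = ∑ i ∈ range N, g (i + 1) := sum_congr rfl fun i _ => hfg i
    _ = ∑ i ∈ range N, g i := by rw [← h1, h2]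

theorem swap {A : Type*} [Ring A] {x y : A} (h : x * y = y * x) (z : A) :
    x * (y * z) = y * (x * z) := by
  rw [← mul_assoc, h, mul_assoc]

theorem pswap {A : Type*} [Ring A] {x y : A} (h : x * y = y * x) (m n : ℕ) (z : A) :
    x ^ m * (y ^ n * z) = y ^ n * (x ^ m * z) :=
  swap (((show Commute x y from h).pow_pow m n).eq) z

theorem dfPascal (n k : ℕ) :
    (n + 1).descFactorial (k + 1) = n.descFactorial (k + 1) + (k + 1) * n.descFactorial k := by
  rcases le_or_gt k n with h | h
  · rw [Nat.succ_descFactorial_succ, Nat.descFactorial_succ]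
    have : n + 1 = (n - k) + (k + 1) := by omega
    rw [this, Nat.add_mul]
  · rw [Nat.descFactorial_eq_zero_iff_lt.2 h,
      Nat.descFactorial_eq_zero_iff_lt.2 (by omega : n < k + 1),
      Nat.descFactorial_eq_zero_iff_lt.2 (by omega : n + 1 < k + 1)]
    simp

section Alg

variable {K : Type*} [Field K] [CharZero K] {A : Type*} [Ring A] [Algebra K A]

theorem step {x y e : A} (h : e * y = y * e - x) (hxy : x * y = y * x) :
    ∀ M : ℕ, e * y ^ (M + 1) = y ^ (M + 1) * e - ((M + 1 : ℕ) : K) • (x * y ^ M) := by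
  intro M
  induction M with
  | zero => simpa using h
  | succ M ih =>
    have h1 : e * y ^ (M + 2) = (e * y) * y ^ (M + 1) := by
      rw [pow_succ' y (M + 1), ← mul_assoc]
    rw [h1, h, sub_mul, mul_assoc, ih, mul_sub, mul_smul_comm,
      swap hxy.symm (y ^ M), ← pow_succ' y M,
      ← mul_assoc y (y ^ (M + 1)) e, ← pow_succ' y (M + 1)]
    push_cast
    module

theorem step' {x y e : A} (h : e * y = y * e - x) (hxy : x * y = y * x) (M : ℕ) :
    e * y ^ M = y ^ M * e - ((M : ℕ) : K) • (x * y ^ (M - 1)) := by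
  cases M with
  | zero => simp
  | succ M => simpa using step (K := K) h hxy M

variable (K) in
noncomputable def cB (n q α : ℕ) : K :=
  (-1) ^ α * ((q.descFactorial α * n.descFactorial α : ℕ) : K) / ((α.factorial : ℕ) : K)

theorem cB_zero (n q : ℕ) : cB K n q 0 = 1 := by simp [cB]

theorem cB_vanish {n α : ℕ} (q : ℕ) (h : n < α) : cB K n q α = 0 := by
  simp [cB, Nat.descFactorial_eq_zero_iff_lt.2 h]

theorem keyB (n q α : ℕ) :
    cB K (n + 1) q (α + 1) - cB K n q (α + 1) = -(((q - α : ℕ) : K) * cB K n q α) := by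
  simp only [cB, dfPascal n α, Nat.descFactorial_succ q, pow_succ, Nat.factorial_succ]
  have hα : ((α.factorial : ℕ) : K) ≠ 0 := Nat.cast_ne_zero.mpr α.factorial_ne_zero
  have hα1 : ((α : K) + 1) ≠ 0 := by
    have : ((α + 1 : ℕ) : K) ≠ 0 := Nat.cast_ne_zero.mpr (by omega)
    push_cast at this; exact this
  push_cast
  field_simp
  ring

theorem lemB {a b e : A} (hab : a * b = b * a) (hae : a * e = e * a)
    (heb : e * b = b * e - a) (q : ℕ) :
    ∀ n N, n < N → e ^ n * b ^ q =
      ∑ α ∈ range N, cB K n q α • (a ^ α * (b ^ (q - α) * e ^ (n - α))) := by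
  intro n
  induction n with
  | zero =>
    intro N hN
    rw [Finset.sum_eq_single 0]
    · simp [cB]
    · intro α _ hα
      rw [cB_vanish q (by omega), zero_smul]
    · intro h; exact absurd (mem_range.2 hN) h
  | succ n ih =>
    intro N hN
    have heA : ∀ α : ℕ, e * a ^ α = a ^ α * e := fun α =>
      ((show Commute e a from hae.symm).pow_right α).eq
    have expand : ∀ α, e * (a ^ α * (b ^ (q - α) * e ^ (n - α))) =
        a ^ α * (b ^ (q - α) * e ^ ((n - α) + 1))
          - ((q - α : ℕ) : K) • (a ^ (α + 1) * (b ^ (q - α - 1) * e ^ (n - α))) := by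
      intro α
      rw [swap (heA α), ← mul_assoc e (b ^ (q - α)) (e ^ (n - α)),
        step' (K := K) heb hab, sub_mul, smul_mul_assoc,
        mul_assoc (b ^ (q - α)) e (e ^ (n - α)), ← pow_succ' e (n - α),
        mul_assoc a (b ^ (q - α - 1)) (e ^ (n - α)),
        mul_sub, mul_smul_comm, ← mul_assoc (a ^ α) a, ← pow_succ]
    calc e ^ (n + 1) * b ^ q = e * (e ^ n * b ^ q) := by rw [pow_succ', mul_assoc]
      _ = ∑ α ∈ range N, cB K n q α • (e * (a ^ α * (b ^ (q - α) * e ^ (n - α)))) := by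
          rw [ih N (by omega), Finset.mul_sum]
          simp only [mul_smul_comm]
      _ = ∑ α ∈ range N,
            (cB K n q α • (a ^ α * (b ^ (q - α) * e ^ (n + 1 - α)))
              + (cB K (n + 1) q (α + 1) - cB K n q (α + 1)) •
                  (a ^ (α + 1) * (b ^ (q - (α + 1)) * e ^ (n + 1 - (α + 1))))) := by
          refine sum_congr rfl fun α _ => ?_
          rw [expand α, smul_sub, smul_smul, keyB, neg_smul, mul_comm (((q - α : ℕ) : K)),
            sub_eq_add_neg,
            show q - α - 1 = q - (α + 1) from by omega,
            show n + 1 - (α + 1) = n - α from by omega]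
          by_cases h : α ≤ n
          · rw [show (n - α) + 1 = n + 1 - α from by omega]
          · rw [cB_vanish q (by omega : n < α)]; simp
      _ = (∑ α ∈ range N, cB K n q α • (a ^ α * (b ^ (q - α) * e ^ (n + 1 - α))))
            + ∑ α ∈ range N, (cB K (n + 1) q (α + 1) - cB K n q (α + 1)) •
                  (a ^ (α + 1) * (b ^ (q - (α + 1)) * e ^ (n + 1 - (α + 1)))) := by
          rw [Finset.sum_add_distrib]
      _ = (∑ α ∈ range N, cB K n q α • (a ^ α * (b ^ (q - α) * e ^ (n + 1 - α))))
            + ∑ α ∈ range N, (cB K (n + 1) q α - cB K n q α) •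
                  (a ^ α * (b ^ (q - α) * e ^ (n + 1 - α))) := by
          congr 1
          exact sum_shift N _
            (fun α => (cB K (n + 1) q α - cB K n q α) •
              (a ^ α * (b ^ (q - α) * e ^ (n + 1 - α))))
            (fun i => rfl)
            (by simp [cB_zero])
            (by have h1 := cB_vanish (K := K) q (show n < N by omega)
                have h2 := cB_vanish (K := K) q (show n + 1 < N by omega)
                simp [h1, h2])
      _ = ∑ α ∈ range N, cB K (n + 1) q α • (a ^ α * (b ^ (q - α) * e ^ (n + 1 - α))) := by
          rw [← Finset.sum_add_distrib]
          refine sum_congr rfl fun α _ => ?_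
          rw [← add_smul]
          congr 1
          ring

theorem mulstep {x y e : A} (h : e * y = y * e - x) (hxy : x * y = y * x) (M : ℕ) (Z : A) :
    e * (y ^ M * Z) = y ^ M * (e * Z) - ((M : ℕ) : K) • (x * (y ^ (M - 1) * Z)) := by
  rw [← mul_assoc, step' (K := K) h hxy, sub_mul, smul_mul_assoc, mul_assoc, mul_assoc]

variable (K) in
noncomputable def cC (n r β1 β2 : ℕ) : K :=
  (-1) ^ β1 * ((r.descFactorial (β1 + β2) * n.descFactorial (β1 + 2 * β2) : ℕ) : K)
    / ((2 ^ β2 * β1.factorial * β2.factorial : ℕ) : K)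

theorem cC_vanish {n β1 β2 : ℕ} (r : ℕ) (h : n < β1 + 2 * β2) : cC K n r β1 β2 = 0 := by
  simp [cC, Nat.descFactorial_eq_zero_iff_lt.2 h]

variable (K) in
noncomputable def vC1 (n r β1 β2 : ℕ) : K :=
  if β1 = 0 then 0 else -(((r - (β1 - 1 + β2) : ℕ)) : K) * cC K n r (β1 - 1) β2

variable (K) in
noncomputable def vC2 (n r β1 β2 : ℕ) : K :=
  if β2 = 0 then 0 else -(((β1 + 1 : ℕ)) : K) * cC K n r (β1 + 1) (β2 - 1)

theorem vC1_succ (n r β1 β2 : ℕ) :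
    vC1 K n r (β1 + 1) β2 = -(((r - (β1 + β2) : ℕ)) : K) * cC K n r β1 β2 := by
  simp [vC1]

theorem vC2_succ (n r β1 β2 : ℕ) :
    vC2 K n r β1 (β2 + 1) = -(((β1 + 1 : ℕ)) : K) * cC K n r (β1 + 1) β2 := by
  simp [vC2]

set_option maxHeartbeats 2000000 in
theorem keyC (n r β1 β2 : ℕ) :
    cC K (n + 1) r β1 β2 = cC K n r β1 β2 + vC1 K n r β1 β2 + vC2 K n r β1 β2 := by
  have h2 : ((2 : ℕ) : K) ≠ 0 := by norm_num
  have h2' : (2 : K) ≠ 0 := by norm_num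
  rcases β1 with _ | β1 <;> rcases β2 with _ | β2
  · simp [cC, vC1, vC2]
  · -- β1 = 0, β2 = β2+1
    simp only [vC1, vC2, if_true, if_neg (Nat.succ_ne_zero β2), cC, Nat.succ_sub_one]
    rw [show 0 + 2 * (β2 + 1) = (2 * β2 + 1) + 1 from by omega, dfPascal n (2 * β2 + 1),
      show 0 + (β2 + 1) = β2 + 1 from by omega,
      show 0 + 1 + β2 = β2 + 1 from by omega,
      show 0 + 1 + 2 * β2 = 2 * β2 + 1 from by omega,
      Nat.factorial_succ (β2), pow_succ 2 β2]
    simp only [Nat.factorial_zero, Nat.zero_add, Nat.factorial_one]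
    push_cast
    have hb2 : ((β2.factorial : ℕ) : K) ≠ 0 := Nat.cast_ne_zero.mpr β2.factorial_ne_zero
    have hp2 : ((2 : K)) ^ β2 ≠ 0 := pow_ne_zero _ (by norm_num)
    have hb21 : ((β2 : K) + 1) ≠ 0 := by
      have : ((β2 + 1 : ℕ) : K) ≠ 0 := Nat.cast_ne_zero.mpr (by omega)
      push_cast at this; exact this
    field_simp
    ring
  · -- β1 = β1+1, β2 = 0
    simp only [vC1, vC2, if_true, if_neg (Nat.succ_ne_zero β1), cC, Nat.succ_sub_one]
    rw [show (β1 + 1) + 2 * 0 = β1 + 1 from by omega, dfPascal n β1,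
      show (β1 + 1) + 0 = β1 + 1 from by omega,
      Nat.descFactorial_succ r β1,
      Nat.factorial_succ β1]
    simp only [Nat.factorial_zero, Nat.zero_add, Nat.factorial_one, pow_zero]
    push_cast
    have hb1 : ((β1.factorial : ℕ) : K) ≠ 0 := Nat.cast_ne_zero.mpr β1.factorial_ne_zero
    have hb11 : ((β1 : K) + 1) ≠ 0 := by
      have : ((β1 + 1 : ℕ) : K) ≠ 0 := Nat.cast_ne_zero.mpr (by omega)
      push_cast at this; exact this
    field_simp
    ring
  · -- both succ
    simp only [vC1, vC2, if_neg (Nat.succ_ne_zero β1), if_neg (Nat.succ_ne_zero β2),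
      Nat.succ_sub_one, cC]
    rw [show (β1 + 1) + 2 * (β2 + 1) = (β1 + 2 * β2 + 2) + 1 from by omega,
      dfPascal n (β1 + 2 * β2 + 2),
      show (β1 + 1) + (β2 + 1) = (β1 + β2 + 1) + 1 from by omega,
      Nat.descFactorial_succ r (β1 + β2 + 1),
      show β1 + (β2 + 1) = β1 + β2 + 1 from by omega,
      show β1 + 2 * (β2 + 1) = β1 + 2 * β2 + 2 from by omega,
      show (β1 + 1 + 1) + β2 = (β1 + β2 + 1) + 1 from by omega,
      show (β1 + 1 + 1) + 2 * β2 = β1 + 2 * β2 + 2 from by omega,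
      Nat.descFactorial_succ r (β1 + β2 + 1),
      Nat.factorial_succ (β1 + 1), Nat.factorial_succ β1, Nat.factorial_succ β2,
      pow_succ 2 β2]
    push_cast
    have hb1 : ((β1.factorial : ℕ) : K) ≠ 0 := Nat.cast_ne_zero.mpr β1.factorial_ne_zero
    have hb2 : ((β2.factorial : ℕ) : K) ≠ 0 := Nat.cast_ne_zero.mpr β2.factorial_ne_zero
    have hp2 : ((2 : K)) ^ β2 ≠ 0 := pow_ne_zero _ (by norm_num)
    have hb11 : ((β1 : K) + 1) ≠ 0 := by
      have : ((β1 + 1 : ℕ) : K) ≠ 0 := Nat.cast_ne_zero.mpr (by omega)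
      push_cast at this; exact this
    have hb21 : ((β2 : K) + 1) ≠ 0 := by
      have : ((β2 + 1 : ℕ) : K) ≠ 0 := Nat.cast_ne_zero.mpr (by omega)
      push_cast at this; exact this
    have hb12 : ((β1 : K) + 1 + 1) ≠ 0 := by
      have : ((β1 + 1 + 1 : ℕ) : K) ≠ 0 := Nat.cast_ne_zero.mpr (by omega)
      push_cast at this; exact this
    field_simp
    ring

theorem lemC {a b c e : A} (hab : a * b = b * a) (hae : a * e = e * a) (hbc : b * c = c * b)
    (heb : e * b = b * e - a) (hec : e * c = c * e - b) (r : ℕ) :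
    ∀ n N, n < N → e ^ n * c ^ r =
      ∑ β1 ∈ range N, ∑ β2 ∈ range N,
        cC K n r β1 β2 •
          (a ^ β2 * (b ^ β1 * (c ^ (r - (β1 + β2)) * e ^ (n - (β1 + 2 * β2))))) := by
  intro n
  induction n with
  | zero =>
    intro N hN
    rw [Finset.sum_eq_single 0, Finset.sum_eq_single 0]
    · simp [cC]
    · intro β2 _ hβ2
      rw [cC_vanish r (by omega), zero_smul]
    · intro h; exact absurd (mem_range.2 hN) h
    · intro β1 _ hβ1
      refine Finset.sum_eq_zero fun β2 _ => ?_
      rw [cC_vanish r (by omega), zero_smul]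
    · intro h; exact absurd (mem_range.2 hN) h
  | succ n ih =>
    intro N hN
    have heA : ∀ m : ℕ, e * a ^ m = a ^ m * e := fun m =>
      ((show Commute e a from hae.symm).pow_right m).eq
    have expand : ∀ β1 β2, e * (a ^ β2 * (b ^ β1 * (c ^ (r - (β1 + β2)) * e ^ (n - (β1 + 2 * β2))))) =
        a ^ β2 * (b ^ β1 * (c ^ (r - (β1 + β2)) * e ^ ((n - (β1 + 2 * β2)) + 1)))
          - ((r - (β1 + β2) : ℕ) : K) •
              (a ^ β2 * (b ^ (β1 + 1) * (c ^ (r - (β1 + β2) - 1) * e ^ (n - (β1 + 2 * β2)))))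
          - ((β1 : ℕ) : K) •
              (a ^ (β2 + 1) * (b ^ (β1 - 1) * (c ^ (r - (β1 + β2)) * e ^ (n - (β1 + 2 * β2))))) := by
      intro β1 β2
      rw [swap (heA β2), mulstep (K := K) heb hab β1,
        mulstep (K := K) hec hbc (r - (β1 + β2)), ← pow_succ' e,
        mul_sub (b ^ β1), mul_smul_comm, ← mul_assoc (b ^ β1) b, ← pow_succ,
        mul_sub (a ^ β2), mul_sub (a ^ β2), mul_smul_comm, mul_smul_comm,
        ← mul_assoc (a ^ β2) a, ← pow_succ]
    calc e ^ (n + 1) * c ^ r = e * (e ^ n * c ^ r) := by rw [pow_succ', mul_assoc]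
      _ = ∑ β1 ∈ range N, ∑ β2 ∈ range N, cC K n r β1 β2 •
            (e * (a ^ β2 * (b ^ β1 * (c ^ (r - (β1 + β2)) * e ^ (n - (β1 + 2 * β2)))))) := by
          rw [ih N (by omega)]
          simp only [Finset.mul_sum, mul_smul_comm]
      _ = ∑ β1 ∈ range N, ∑ β2 ∈ range N,
            ((cC K n r β1 β2 •
              (a ^ β2 * (b ^ β1 * (c ^ (r - (β1 + β2)) * e ^ (n + 1 - (β1 + 2 * β2)))))
            + vC1 K n r (β1 + 1) β2 •
              (a ^ β2 * (b ^ (β1 + 1) * (c ^ (r - ((β1 + 1) + β2)) * e ^ (n + 1 - ((β1 + 1) + 2 * β2))))))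
            + (-(((β1 : ℕ) : K) * cC K n r β1 β2)) •
              (a ^ (β2 + 1) * (b ^ (β1 - 1) * (c ^ (r - (β1 + β2)) * e ^ (n - (β1 + 2 * β2)))))) := by
          refine sum_congr rfl fun β1 _ => sum_congr rfl fun β2 _ => ?_
          rw [expand β1 β2, smul_sub, smul_sub, smul_smul, smul_smul,
            sub_eq_add_neg, sub_eq_add_neg]
          congr 1
          · congr 1
            · by_cases h : β1 + 2 * β2 ≤ n
              · rw [show (n - (β1 + 2 * β2)) + 1 = n + 1 - (β1 + 2 * β2) from by omega]
              · rw [cC_vanish r (by omega : n < β1 + 2 * β2)]; simp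
            · rw [vC1_succ, neg_mul, neg_smul,
                mul_comm (cC K n r β1 β2) (((r - (β1 + β2) : ℕ) : K)),
                show r - (β1 + β2) - 1 = r - ((β1 + 1) + β2) from by omega,
                show n - (β1 + 2 * β2) = n + 1 - ((β1 + 1) + 2 * β2) from by omega]
          · rw [mul_comm (cC K n r β1 β2) (((β1 : ℕ) : K)), neg_smul]
      _ = ((∑ β1 ∈ range N, ∑ β2 ∈ range N, cC K n r β1 β2 •
              (a ^ β2 * (b ^ β1 * (c ^ (r - (β1 + β2)) * e ^ (n + 1 - (β1 + 2 * β2))))))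
          + ∑ β1 ∈ range N, ∑ β2 ∈ range N, vC1 K n r (β1 + 1) β2 •
              (a ^ β2 * (b ^ (β1 + 1) * (c ^ (r - ((β1 + 1) + β2)) * e ^ (n + 1 - ((β1 + 1) + 2 * β2))))))
          + ∑ β1 ∈ range N, ∑ β2 ∈ range N, (-(((β1 : ℕ) : K) * cC K n r β1 β2)) •
              (a ^ (β2 + 1) * (b ^ (β1 - 1) * (c ^ (r - (β1 + β2)) * e ^ (n - (β1 + 2 * β2))))) := by
          rw [← Finset.sum_add_distrib, ← Finset.sum_add_distrib]
          exact sum_congr rfl fun β1 _ => by rw [← Finset.sum_add_distrib, ← Finset.sum_add_distrib]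
      _ = ((∑ β1 ∈ range N, ∑ β2 ∈ range N, cC K n r β1 β2 •
              (a ^ β2 * (b ^ β1 * (c ^ (r - (β1 + β2)) * e ^ (n + 1 - (β1 + 2 * β2))))))
          + ∑ β1 ∈ range N, ∑ β2 ∈ range N, vC1 K n r β1 β2 •
              (a ^ β2 * (b ^ β1 * (c ^ (r - (β1 + β2)) * e ^ (n + 1 - (β1 + 2 * β2))))))
          + ∑ β1 ∈ range N, ∑ β2 ∈ range N, vC2 K n r β1 β2 •
              (a ^ β2 * (b ^ β1 * (c ^ (r - (β1 + β2)) * e ^ (n + 1 - (β1 + 2 * β2))))) := by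
          congr 1
          · congr 1
            refine sum_shift N _ _ (fun β1 => rfl) ?_ ?_
            · refine Finset.sum_eq_zero fun β2 _ => ?_
              simp [vC1]
            · refine Finset.sum_eq_zero fun β2 _ => ?_
              have : cC K n r (N - 1) β2 = 0 := cC_vanish r (by omega)
              simp [vC1, show N ≠ 0 from by omega, this]
          · -- third sum: shift β1 up, identify with vC2, then shift β2
            rw [← sum_shift N
                (fun β1 => ∑ β2 ∈ range N, (-(((β1 + 1 : ℕ) : K) * cC K n r (β1 + 1) β2)) •
                  (a ^ (β2 + 1) * (b ^ ((β1 + 1) - 1) *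
                    (c ^ (r - ((β1 + 1) + β2)) * e ^ (n - ((β1 + 1) + 2 * β2))))))
                (fun β1 => ∑ β2 ∈ range N, (-(((β1 : ℕ) : K) * cC K n r β1 β2)) •
                  (a ^ (β2 + 1) * (b ^ (β1 - 1) * (c ^ (r - (β1 + β2)) * e ^ (n - (β1 + 2 * β2))))))
                (fun β1 => rfl)
                (by
                  refine Finset.sum_eq_zero fun β2 _ => ?_
                  norm_num)
                (by
                  refine Finset.sum_eq_zero fun β2 _ => ?_
                  rw [cC_vanish r (by omega : n < N + 2 * β2)]
                  simp)]
            refine sum_congr rfl fun β1 _ => ?_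
            refine sum_shift N _ _ (fun β2 => ?_) ?_ ?_
            · rw [Nat.add_sub_cancel,
                show r - ((β1 + 1) + β2) = r - (β1 + (β2 + 1)) from by omega,
                show n - ((β1 + 1) + 2 * β2) = n + 1 - (β1 + 2 * (β2 + 1)) from by omega,
                vC2_succ, neg_mul]
            · simp [vC2]
            · have : cC K n r (β1 + 1) (N - 1) = 0 := cC_vanish r (by omega)
              simp [vC2, show N ≠ 0 from by omega, this]
      _ = ∑ β1 ∈ range N, ∑ β2 ∈ range N, cC K (n + 1) r β1 β2 •
            (a ^ β2 * (b ^ β1 * (c ^ (r - (β1 + β2)) * e ^ (n + 1 - (β1 + 2 * β2))))) := by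
          rw [← Finset.sum_add_distrib, ← Finset.sum_add_distrib]
          refine sum_congr rfl fun β1 _ => ?_
          rw [← Finset.sum_add_distrib, ← Finset.sum_add_distrib]
          refine sum_congr rfl fun β2 _ => ?_
          rw [← add_smul, ← add_smul, keyC]

variable (K) in
noncomputable def cD (n s γ1 γ2 γ3 : ℕ) : K :=
  (-1) ^ (γ1 + γ3) *
    ((s.descFactorial (γ1 + γ2 + γ3) * n.descFactorial (γ1 + 2 * γ2 + 3 * γ3) : ℕ) : K)
    / ((2 ^ γ2 * 6 ^ γ3 * γ1.factorial * γ2.factorial * γ3.factorial : ℕ) : K)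

theorem cD_vanish {n γ1 γ2 γ3 : ℕ} (s : ℕ) (h : n < γ1 + 2 * γ2 + 3 * γ3) :
    cD K n s γ1 γ2 γ3 = 0 := by
  simp [cD, Nat.descFactorial_eq_zero_iff_lt.2 h]

variable (K) in
noncomputable def vD1 (n s γ1 γ2 γ3 : ℕ) : K :=
  if γ1 = 0 then 0 else -(((s - ((γ1 - 1) + γ2 + γ3) : ℕ)) : K) * cD K n s (γ1 - 1) γ2 γ3

variable (K) in
noncomputable def vD2 (n s γ1 γ2 γ3 : ℕ) : K :=
  if γ2 = 0 then 0 else -(((γ1 + 1 : ℕ)) : K) * cD K n s (γ1 + 1) (γ2 - 1) γ3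

variable (K) in
noncomputable def vD3 (n s γ1 γ2 γ3 : ℕ) : K :=
  if γ3 = 0 then 0 else -(((γ2 + 1 : ℕ)) : K) * cD K n s γ1 (γ2 + 1) (γ3 - 1)

theorem vD1_succ (n s γ1 γ2 γ3 : ℕ) :
    vD1 K n s (γ1 + 1) γ2 γ3 = -(((s - (γ1 + γ2 + γ3) : ℕ)) : K) * cD K n s γ1 γ2 γ3 := by
  simp [vD1]

theorem vD2_succ (n s γ1 γ2 γ3 : ℕ) :
    vD2 K n s γ1 (γ2 + 1) γ3 = -(((γ1 + 1 : ℕ)) : K) * cD K n s (γ1 + 1) γ2 γ3 := by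
  simp [vD2]

theorem vD3_succ (n s γ1 γ2 γ3 : ℕ) :
    vD3 K n s γ1 γ2 (γ3 + 1) = -(((γ2 + 1 : ℕ)) : K) * cD K n s γ1 (γ2 + 1) γ3 := by
  simp [vD3]

set_option maxHeartbeats 2000000 in
theorem keyD (n s γ1 γ2 γ3 : ℕ) :
    cD K (n + 1) s γ1 γ2 γ3 = cD K n s γ1 γ2 γ3 + vD1 K n s γ1 γ2 γ3
      + vD2 K n s γ1 γ2 γ3 + vD3 K n s γ1 γ2 γ3 := by
  have hden : ∀ a b c d e : ℕ, ((2 ^ a * 6 ^ b * c.factorial * d.factorial * e.factorial : ℕ) : K) ≠ 0 := by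
    intro a b c d e
    refine Nat.cast_ne_zero.mpr
      (Nat.mul_ne_zero (Nat.mul_ne_zero (Nat.mul_ne_zero (Nat.mul_ne_zero ?_ ?_) ?_) ?_) ?_) <;>
      first
        | exact Nat.factorial_ne_zero _
        | exact pow_ne_zero _ (by omega)
  rcases γ1 with _ | g1 <;> rcases γ2 with _ | g2 <;> rcases γ3 with _ | g3
  · simp [cD, vD1, vD2, vD3]
  · simp only [vD1, vD2, vD3, cD, if_neg (Nat.succ_ne_zero g3), Nat.succ_sub_one, reduceIte]
    rw [show 0 + 2 * 0 + 3 * (g3 + 1) = (3 * g3 + 2) + 1 from by omega,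
      dfPascal n (3 * g3 + 2),
      show 0 + 2 * 1 + 3 * g3 = 3 * g3 + 2 from by omega,
      show 0 + 0 + (g3 + 1) = g3 + 1 from by omega,
      show 0 + 1 + g3 = g3 + 1 from by omega]
    simp only [add_zero, zero_add, mul_div_assoc']
    rw [div_add_div _ _ (hden _ _ _ _ _) (hden _ _ _ _ _)]
    rw [div_eq_div_iff (hden _ _ _ _ _) (mul_ne_zero (hden _ _ _ _ _) (hden _ _ _ _ _))]
    push_cast [Nat.factorial_succ, Nat.pow_succ]
    ring
  · simp only [vD1, vD2, vD3, cD, if_neg (Nat.succ_ne_zero g2), Nat.succ_sub_one, reduceIte]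
    rw [show 0 + 2 * (g2 + 1) + 3 * 0 = (2 * g2 + 1) + 1 from by omega,
      dfPascal n (2 * g2 + 1),
      show 1 + 2 * g2 + 3 * 0 = 2 * g2 + 1 from by omega,
      show 0 + (g2 + 1) + 0 = g2 + 1 from by omega,
      show 1 + g2 + 0 = g2 + 1 from by omega]
    simp only [add_zero, zero_add, mul_div_assoc']
    rw [div_add_div _ _ (hden _ _ _ _ _) (hden _ _ _ _ _)]
    rw [div_eq_div_iff (hden _ _ _ _ _) (mul_ne_zero (hden _ _ _ _ _) (hden _ _ _ _ _))]
    push_cast [Nat.factorial_succ, Nat.pow_succ]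
    ring
  · simp only [vD1, vD2, vD3, cD, if_neg (Nat.succ_ne_zero g2),
      if_neg (Nat.succ_ne_zero g3), Nat.succ_sub_one, reduceIte]
    rw [show 0 + 2 * (g2 + 1) + 3 * (g3 + 1) = (2 * g2 + 3 * g3 + 4) + 1 from by omega,
      dfPascal n (2 * g2 + 3 * g3 + 4),
      show 1 + 2 * g2 + 3 * (g3 + 1) = 2 * g2 + 3 * g3 + 4 from by omega,
      show 0 + 2 * (g2 + 2) + 3 * g3 = 2 * g2 + 3 * g3 + 4 from by omega,
      show 0 + (g2 + 1) + (g3 + 1) = g2 + g3 + 2 from by omega,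
      show 1 + g2 + (g3 + 1) = g2 + g3 + 2 from by omega,
      show 0 + (g2 + 2) + g3 = g2 + g3 + 2 from by omega]
    simp only [add_zero, zero_add, mul_div_assoc']
    rw [div_add_div _ _ (hden _ _ _ _ _) (hden _ _ _ _ _)]
    rw [div_add_div _ _ (mul_ne_zero (hden _ _ _ _ _) (hden _ _ _ _ _)) (hden _ _ _ _ _)]
    rw [div_eq_div_iff (hden _ _ _ _ _) (mul_ne_zero (mul_ne_zero (hden _ _ _ _ _) (hden _ _ _ _ _)) (hden _ _ _ _ _))]
    push_cast [Nat.factorial_succ, Nat.pow_succ]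
    ring
  · simp only [vD1, vD2, vD3, cD, if_neg (Nat.succ_ne_zero g1), Nat.succ_sub_one, reduceIte]
    rw [show (g1 + 1) + 2 * 0 + 3 * 0 = g1 + 1 from by omega,
      dfPascal n g1,
      Nat.descFactorial_succ s g1]
    simp only [add_zero, zero_add, mul_div_assoc']
    rw [div_add_div _ _ (hden _ _ _ _ _) (hden _ _ _ _ _)]
    rw [div_eq_div_iff (hden _ _ _ _ _) (mul_ne_zero (hden _ _ _ _ _) (hden _ _ _ _ _))]
    push_cast [Nat.factorial_succ, Nat.pow_succ]
    ring
  · simp only [vD1, vD2, vD3, cD, if_neg (Nat.succ_ne_zero g1),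
      if_neg (Nat.succ_ne_zero g3), Nat.succ_sub_one, reduceIte]
    rw [show (g1 + 1) + 2 * 0 + 3 * (g3 + 1) = (g1 + 3 * g3 + 3) + 1 from by omega,
      dfPascal n (g1 + 3 * g3 + 3),
      show g1 + 2 * 0 + 3 * (g3 + 1) = g1 + 3 * g3 + 3 from by omega,
      show (g1 + 1) + 2 * 1 + 3 * g3 = g1 + 3 * g3 + 3 from by omega,
      show (g1 + 1) + 0 + (g3 + 1) = (g1 + g3 + 1) + 1 from by omega,
      show g1 + 0 + (g3 + 1) = g1 + g3 + 1 from by omega,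
      show (g1 + 1) + 1 + g3 = (g1 + g3 + 1) + 1 from by omega,
      Nat.descFactorial_succ s (g1 + g3 + 1)]
    simp only [add_zero, zero_add, mul_div_assoc']
    rw [div_add_div _ _ (hden _ _ _ _ _) (hden _ _ _ _ _)]
    rw [div_add_div _ _ (mul_ne_zero (hden _ _ _ _ _) (hden _ _ _ _ _)) (hden _ _ _ _ _)]
    rw [div_eq_div_iff (hden _ _ _ _ _) (mul_ne_zero (mul_ne_zero (hden _ _ _ _ _) (hden _ _ _ _ _)) (hden _ _ _ _ _))]
    push_cast [Nat.factorial_succ, Nat.pow_succ]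
    ring
  · simp only [vD1, vD2, vD3, cD, if_neg (Nat.succ_ne_zero g1),
      if_neg (Nat.succ_ne_zero g2), Nat.succ_sub_one, reduceIte]
    rw [show (g1 + 1) + 2 * (g2 + 1) + 3 * 0 = (g1 + 2 * g2 + 2) + 1 from by omega,
      dfPascal n (g1 + 2 * g2 + 2),
      show g1 + 2 * (g2 + 1) + 3 * 0 = g1 + 2 * g2 + 2 from by omega,
      show (g1 + 2) + 2 * g2 + 3 * 0 = g1 + 2 * g2 + 2 from by omega,
      show (g1 + 1) + (g2 + 1) + 0 = (g1 + g2 + 1) + 1 from by omega,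
      show g1 + (g2 + 1) + 0 = g1 + g2 + 1 from by omega,
      show (g1 + 2) + g2 + 0 = (g1 + g2 + 1) + 1 from by omega,
      Nat.descFactorial_succ s (g1 + g2 + 1)]
    simp only [add_zero, zero_add, mul_div_assoc']
    rw [div_add_div _ _ (hden _ _ _ _ _) (hden _ _ _ _ _)]
    rw [div_add_div _ _ (mul_ne_zero (hden _ _ _ _ _) (hden _ _ _ _ _)) (hden _ _ _ _ _)]
    rw [div_eq_div_iff (hden _ _ _ _ _) (mul_ne_zero (mul_ne_zero (hden _ _ _ _ _) (hden _ _ _ _ _)) (hden _ _ _ _ _))]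
    push_cast [Nat.factorial_succ, Nat.pow_succ]
    ring
  · simp only [vD1, vD2, vD3, cD, if_neg (Nat.succ_ne_zero g1),
      if_neg (Nat.succ_ne_zero g2), if_neg (Nat.succ_ne_zero g3), Nat.succ_sub_one, reduceIte]
    rw [show (g1 + 1) + 2 * (g2 + 1) + 3 * (g3 + 1) = (g1 + 2 * g2 + 3 * g3 + 5) + 1 from by omega,
      dfPascal n (g1 + 2 * g2 + 3 * g3 + 5),
      show g1 + 2 * (g2 + 1) + 3 * (g3 + 1) = g1 + 2 * g2 + 3 * g3 + 5 from by omega,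
      show (g1 + 2) + 2 * g2 + 3 * (g3 + 1) = g1 + 2 * g2 + 3 * g3 + 5 from by omega,
      show (g1 + 1) + 2 * (g2 + 2) + 3 * g3 = g1 + 2 * g2 + 3 * g3 + 5 from by omega,
      show (g1 + 1) + (g2 + 1) + (g3 + 1) = (g1 + g2 + g3 + 2) + 1 from by omega,
      show g1 + (g2 + 1) + (g3 + 1) = g1 + g2 + g3 + 2 from by omega,
      show (g1 + 2) + g2 + (g3 + 1) = (g1 + g2 + g3 + 2) + 1 from by omega,
      show (g1 + 1) + (g2 + 2) + g3 = (g1 + g2 + g3 + 2) + 1 from by omega,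
      Nat.descFactorial_succ s (g1 + g2 + g3 + 2)]
    simp only [add_zero, zero_add, mul_div_assoc']
    rw [div_add_div _ _ (hden _ _ _ _ _) (hden _ _ _ _ _)]
    rw [div_add_div _ _ (mul_ne_zero (hden _ _ _ _ _) (hden _ _ _ _ _)) (hden _ _ _ _ _)]
    rw [div_add_div _ _ (mul_ne_zero (mul_ne_zero (hden _ _ _ _ _) (hden _ _ _ _ _)) (hden _ _ _ _ _)) (hden _ _ _ _ _)]
    rw [div_eq_div_iff (hden _ _ _ _ _) (mul_ne_zero (mul_ne_zero (mul_ne_zero (hden _ _ _ _ _) (hden _ _ _ _ _)) (hden _ _ _ _ _)) (hden _ _ _ _ _))]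
    push_cast [Nat.factorial_succ, Nat.pow_succ]
    ring

set_option maxHeartbeats 1000000 in
theorem lemD {a b c d e : A} (hab : a * b = b * a) (hae : a * e = e * a) (hbc : b * c = c * b)
    (hcd : c * d = d * c) (heb : e * b = b * e - a) (hec : e * c = c * e - b)
    (hed : e * d = d * e - c) (s : ℕ) :
    ∀ n N, n < N → e ^ n * d ^ s =
      ∑ γ1 ∈ range N, ∑ γ2 ∈ range N, ∑ γ3 ∈ range N,
        cD K n s γ1 γ2 γ3 •
          (a ^ γ3 * (b ^ γ2 * (c ^ γ1 *
            (d ^ (s - (γ1 + γ2 + γ3)) * e ^ (n - (γ1 + 2 * γ2 + 3 * γ3)))))) := by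
  intro n
  induction n with
  | zero =>
    intro N hN
    rw [Finset.sum_eq_single 0, Finset.sum_eq_single 0, Finset.sum_eq_single 0]
    · simp [cD]
    · intro γ3 _ hγ3
      rw [cD_vanish s (by omega), zero_smul]
    · intro h; exact absurd (mem_range.2 hN) h
    · intro γ2 _ hγ2
      refine Finset.sum_eq_zero fun γ3 _ => ?_
      rw [cD_vanish s (by omega), zero_smul]
    · intro h; exact absurd (mem_range.2 hN) h
    · intro γ1 _ hγ1
      refine Finset.sum_eq_zero fun γ2 _ => Finset.sum_eq_zero fun γ3 _ => ?_
      rw [cD_vanish s (by omega), zero_smul]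
    · intro h; exact absurd (mem_range.2 hN) h
  | succ n ih =>
    intro N hN
    have heA : ∀ m : ℕ, e * a ^ m = a ^ m * e := fun m =>
      ((show Commute e a from hae.symm).pow_right m).eq
    have expand : ∀ γ1 γ2 γ3, e * (a ^ γ3 * (b ^ γ2 * (c ^ γ1 *
          (d ^ (s - (γ1 + γ2 + γ3)) * e ^ (n - (γ1 + 2 * γ2 + 3 * γ3)))))) =
        a ^ γ3 * (b ^ γ2 * (c ^ γ1 *
          (d ^ (s - (γ1 + γ2 + γ3)) * e ^ ((n - (γ1 + 2 * γ2 + 3 * γ3)) + 1))))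
        - ((s - (γ1 + γ2 + γ3) : ℕ) : K) • (a ^ γ3 * (b ^ γ2 * (c ^ (γ1 + 1) *
            (d ^ (s - (γ1 + γ2 + γ3) - 1) * e ^ (n - (γ1 + 2 * γ2 + 3 * γ3))))))
        - ((γ1 : ℕ) : K) • (a ^ γ3 * (b ^ (γ2 + 1) * (c ^ (γ1 - 1) *
            (d ^ (s - (γ1 + γ2 + γ3)) * e ^ (n - (γ1 + 2 * γ2 + 3 * γ3))))))
        - ((γ2 : ℕ) : K) • (a ^ (γ3 + 1) * (b ^ (γ2 - 1) * (c ^ γ1 *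
            (d ^ (s - (γ1 + γ2 + γ3)) * e ^ (n - (γ1 + 2 * γ2 + 3 * γ3)))))) := by
      intro γ1 γ2 γ3
      rw [swap (heA γ3), mulstep (K := K) heb hab γ2,
        mulstep (K := K) hec hbc γ1,
        mulstep (K := K) hed hcd (s - (γ1 + γ2 + γ3)), ← pow_succ' e,
        mul_sub (c ^ γ1), mul_smul_comm, ← mul_assoc (c ^ γ1) c, ← pow_succ,
        mul_sub (b ^ γ2), mul_sub (b ^ γ2), mul_smul_comm, mul_smul_comm,
        ← mul_assoc (b ^ γ2) b, ← pow_succ,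
        mul_sub (a ^ γ3), mul_sub (a ^ γ3), mul_sub (a ^ γ3),
        mul_smul_comm, mul_smul_comm, mul_smul_comm,
        ← mul_assoc (a ^ γ3) a, ← pow_succ]
    calc e ^ (n + 1) * d ^ s = e * (e ^ n * d ^ s) := by rw [pow_succ', mul_assoc]
      _ = ∑ γ1 ∈ range N, ∑ γ2 ∈ range N, ∑ γ3 ∈ range N, cD K n s γ1 γ2 γ3 •
            (e * (a ^ γ3 * (b ^ γ2 * (c ^ γ1 *
              (d ^ (s - (γ1 + γ2 + γ3)) * e ^ (n - (γ1 + 2 * γ2 + 3 * γ3))))))) := by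
          rw [ih N (by omega)]
          simp only [Finset.mul_sum, mul_smul_comm]
      _ = ∑ γ1 ∈ range N, ∑ γ2 ∈ range N, ∑ γ3 ∈ range N,
            ((((cD K n s γ1 γ2 γ3 • (a ^ γ3 * (b ^ γ2 * (c ^ γ1 *
                (d ^ (s - (γ1 + γ2 + γ3)) * e ^ (n + 1 - (γ1 + 2 * γ2 + 3 * γ3)))))))
              + vD1 K n s (γ1 + 1) γ2 γ3 • (a ^ γ3 * (b ^ γ2 * (c ^ (γ1 + 1) *
                  (d ^ (s - ((γ1 + 1) + γ2 + γ3)) * e ^ (n + 1 - ((γ1 + 1) + 2 * γ2 + 3 * γ3)))))))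
              + (-(((γ1 : ℕ) : K) * cD K n s γ1 γ2 γ3)) • (a ^ γ3 * (b ^ (γ2 + 1) * (c ^ (γ1 - 1) *
                  (d ^ (s - (γ1 + γ2 + γ3)) * e ^ (n - (γ1 + 2 * γ2 + 3 * γ3)))))))
              + (-(((γ2 : ℕ) : K) * cD K n s γ1 γ2 γ3)) • (a ^ (γ3 + 1) * (b ^ (γ2 - 1) * (c ^ γ1 *
                  (d ^ (s - (γ1 + γ2 + γ3)) * e ^ (n - (γ1 + 2 * γ2 + 3 * γ3))))))) := by
          refine sum_congr rfl fun γ1 _ => sum_congr rfl fun γ2 _ => sum_congr rfl fun γ3 _ => ?_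
          rw [expand γ1 γ2 γ3, smul_sub, smul_sub, smul_sub, smul_smul, smul_smul, smul_smul,
            sub_eq_add_neg, sub_eq_add_neg, sub_eq_add_neg]
          congr 1
          · congr 1
            · congr 1
              · by_cases h : γ1 + 2 * γ2 + 3 * γ3 ≤ n
                · rw [show (n - (γ1 + 2 * γ2 + 3 * γ3)) + 1 = n + 1 - (γ1 + 2 * γ2 + 3 * γ3) from by omega]
                · rw [cD_vanish s (by omega : n < γ1 + 2 * γ2 + 3 * γ3)]; simp
              · rw [vD1_succ, neg_mul, neg_smul,
                  mul_comm (cD K n s γ1 γ2 γ3) (((s - (γ1 + γ2 + γ3) : ℕ) : K)),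
                  show s - (γ1 + γ2 + γ3) - 1 = s - ((γ1 + 1) + γ2 + γ3) from by omega,
                  show n - (γ1 + 2 * γ2 + 3 * γ3) = n + 1 - ((γ1 + 1) + 2 * γ2 + 3 * γ3) from by omega]
            · rw [mul_comm (cD K n s γ1 γ2 γ3) (((γ1 : ℕ) : K)), neg_smul]
          · rw [mul_comm (cD K n s γ1 γ2 γ3) (((γ2 : ℕ) : K)), neg_smul]
      _ = ((((∑ γ1 ∈ range N, ∑ γ2 ∈ range N, ∑ γ3 ∈ range N, cD K n s γ1 γ2 γ3 •
                (a ^ γ3 * (b ^ γ2 * (c ^ γ1 *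
                  (d ^ (s - (γ1 + γ2 + γ3)) * e ^ (n + 1 - (γ1 + 2 * γ2 + 3 * γ3)))))))
            + ∑ γ1 ∈ range N, ∑ γ2 ∈ range N, ∑ γ3 ∈ range N,
                vD1 K n s (γ1 + 1) γ2 γ3 • (a ^ γ3 * (b ^ γ2 * (c ^ (γ1 + 1) *
                  (d ^ (s - ((γ1 + 1) + γ2 + γ3)) * e ^ (n + 1 - ((γ1 + 1) + 2 * γ2 + 3 * γ3)))))))
            + ∑ γ1 ∈ range N, ∑ γ2 ∈ range N, ∑ γ3 ∈ range N,
                (-(((γ1 : ℕ) : K) * cD K n s γ1 γ2 γ3)) • (a ^ γ3 * (b ^ (γ2 + 1) * (c ^ (γ1 - 1) *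
                  (d ^ (s - (γ1 + γ2 + γ3)) * e ^ (n - (γ1 + 2 * γ2 + 3 * γ3)))))))
            + ∑ γ1 ∈ range N, ∑ γ2 ∈ range N, ∑ γ3 ∈ range N,
                (-(((γ2 : ℕ) : K) * cD K n s γ1 γ2 γ3)) • (a ^ (γ3 + 1) * (b ^ (γ2 - 1) * (c ^ γ1 *
                  (d ^ (s - (γ1 + γ2 + γ3)) * e ^ (n - (γ1 + 2 * γ2 + 3 * γ3))))))) := by
          rw [← Finset.sum_add_distrib, ← Finset.sum_add_distrib, ← Finset.sum_add_distrib]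
          refine sum_congr rfl fun γ1 _ => ?_
          rw [← Finset.sum_add_distrib, ← Finset.sum_add_distrib, ← Finset.sum_add_distrib]
          refine sum_congr rfl fun γ2 _ => ?_
          rw [← Finset.sum_add_distrib, ← Finset.sum_add_distrib, ← Finset.sum_add_distrib]
      _ = ((((∑ γ1 ∈ range N, ∑ γ2 ∈ range N, ∑ γ3 ∈ range N, cD K n s γ1 γ2 γ3 •
                (a ^ γ3 * (b ^ γ2 * (c ^ γ1 *
                  (d ^ (s - (γ1 + γ2 + γ3)) * e ^ (n + 1 - (γ1 + 2 * γ2 + 3 * γ3)))))))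
            + ∑ γ1 ∈ range N, ∑ γ2 ∈ range N, ∑ γ3 ∈ range N,
                vD1 K n s γ1 γ2 γ3 • (a ^ γ3 * (b ^ γ2 * (c ^ γ1 *
                  (d ^ (s - (γ1 + γ2 + γ3)) * e ^ (n + 1 - (γ1 + 2 * γ2 + 3 * γ3)))))))
            + ∑ γ1 ∈ range N, ∑ γ2 ∈ range N, ∑ γ3 ∈ range N,
                vD2 K n s γ1 γ2 γ3 • (a ^ γ3 * (b ^ γ2 * (c ^ γ1 *
                  (d ^ (s - (γ1 + γ2 + γ3)) * e ^ (n + 1 - (γ1 + 2 * γ2 + 3 * γ3)))))))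
            + ∑ γ1 ∈ range N, ∑ γ2 ∈ range N, ∑ γ3 ∈ range N,
                vD3 K n s γ1 γ2 γ3 • (a ^ γ3 * (b ^ γ2 * (c ^ γ1 *
                  (d ^ (s - (γ1 + γ2 + γ3)) * e ^ (n + 1 - (γ1 + 2 * γ2 + 3 * γ3))))))) := by
          congr 1
          · congr 1
            · congr 1
              refine sum_shift N _ _ (fun γ1 => rfl) ?_ ?_
              · refine Finset.sum_eq_zero fun γ2 _ => Finset.sum_eq_zero fun γ3 _ => ?_
                simp [vD1]
              · refine Finset.sum_eq_zero fun γ2 _ => Finset.sum_eq_zero fun γ3 _ => ?_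
                have : cD K n s (N - 1) γ2 γ3 = 0 := cD_vanish s (by omega)
                simp [vD1, show N ≠ 0 from by omega, this]
            · -- H2 : shift γ1 up, convert to vD2 at γ2+1, shift γ2
              rw [← sum_shift N
                  (fun γ1 => ∑ γ2 ∈ range N, ∑ γ3 ∈ range N,
                    (-(((γ1 + 1 : ℕ) : K) * cD K n s (γ1 + 1) γ2 γ3)) •
                      (a ^ γ3 * (b ^ (γ2 + 1) * (c ^ ((γ1 + 1) - 1) *
                        (d ^ (s - ((γ1 + 1) + γ2 + γ3)) * e ^ (n - ((γ1 + 1) + 2 * γ2 + 3 * γ3)))))))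
                  (fun γ1 => ∑ γ2 ∈ range N, ∑ γ3 ∈ range N,
                    (-(((γ1 : ℕ) : K) * cD K n s γ1 γ2 γ3)) •
                      (a ^ γ3 * (b ^ (γ2 + 1) * (c ^ (γ1 - 1) *
                        (d ^ (s - (γ1 + γ2 + γ3)) * e ^ (n - (γ1 + 2 * γ2 + 3 * γ3)))))))
                  (fun γ1 => rfl)
                  (by
                    refine Finset.sum_eq_zero fun γ2 _ => Finset.sum_eq_zero fun γ3 _ => ?_
                    norm_num)
                  (by
                    refine Finset.sum_eq_zero fun γ2 _ => Finset.sum_eq_zero fun γ3 _ => ?_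
                    rw [cD_vanish s (by omega : n < N + 2 * γ2 + 3 * γ3)]
                    simp)]
              refine sum_congr rfl fun γ1 _ => ?_
              refine sum_shift N _ _ (fun γ2 => ?_) ?_ ?_
              · refine sum_congr rfl fun γ3 _ => ?_
                rw [Nat.add_sub_cancel,
                  show s - ((γ1 + 1) + γ2 + γ3) = s - (γ1 + (γ2 + 1) + γ3) from by omega,
                  show n - ((γ1 + 1) + 2 * γ2 + 3 * γ3) = n + 1 - (γ1 + 2 * (γ2 + 1) + 3 * γ3) from by omega,
                  vD2_succ, neg_mul]
              · refine Finset.sum_eq_zero fun γ3 _ => ?_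
                simp [vD2]
              · refine Finset.sum_eq_zero fun γ3 _ => ?_
                have : cD K n s (γ1 + 1) (N - 1) γ3 = 0 := cD_vanish s (by omega)
                simp [vD2, show N ≠ 0 from by omega, this]
          · -- H3 : shift γ2 up (middle), convert to vD3 at γ3+1, shift γ3 (inner)
            refine sum_congr rfl fun γ1 _ => ?_
            rw [← sum_shift N
                (fun γ2 => ∑ γ3 ∈ range N,
                  (-(((γ2 + 1 : ℕ) : K) * cD K n s γ1 (γ2 + 1) γ3)) •
                    (a ^ (γ3 + 1) * (b ^ ((γ2 + 1) - 1) * (c ^ γ1 *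
                      (d ^ (s - (γ1 + (γ2 + 1) + γ3)) * e ^ (n - (γ1 + 2 * (γ2 + 1) + 3 * γ3)))))))
                (fun γ2 => ∑ γ3 ∈ range N,
                  (-(((γ2 : ℕ) : K) * cD K n s γ1 γ2 γ3)) •
                    (a ^ (γ3 + 1) * (b ^ (γ2 - 1) * (c ^ γ1 *
                      (d ^ (s - (γ1 + γ2 + γ3)) * e ^ (n - (γ1 + 2 * γ2 + 3 * γ3)))))))
                (fun γ2 => rfl)
                (by
                  refine Finset.sum_eq_zero fun γ3 _ => ?_
                  norm_num)
                (by
                  refine Finset.sum_eq_zero fun γ3 _ => ?_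
                  rw [cD_vanish s (by omega : n < γ1 + 2 * N + 3 * γ3)]
                  simp)]
            refine sum_congr rfl fun γ2 _ => ?_
            refine sum_shift N _ _ (fun γ3 => ?_) ?_ ?_
            · rw [Nat.add_sub_cancel,
                show s - (γ1 + (γ2 + 1) + γ3) = s - (γ1 + γ2 + (γ3 + 1)) from by omega,
                show n - (γ1 + 2 * (γ2 + 1) + 3 * γ3) = n + 1 - (γ1 + 2 * γ2 + 3 * (γ3 + 1)) from by omega,
                vD3_succ, neg_mul]
            · simp [vD3]
            · have : cD K n s γ1 (γ2 + 1) (N - 1) = 0 := cD_vanish s (by omega)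
              simp [vD3, show N ≠ 0 from by omega, this]
      _ = ∑ γ1 ∈ range N, ∑ γ2 ∈ range N, ∑ γ3 ∈ range N, cD K (n + 1) s γ1 γ2 γ3 •
            (a ^ γ3 * (b ^ γ2 * (c ^ γ1 *
              (d ^ (s - (γ1 + γ2 + γ3)) * e ^ (n + 1 - (γ1 + 2 * γ2 + 3 * γ3)))))) := by
          rw [← Finset.sum_add_distrib, ← Finset.sum_add_distrib, ← Finset.sum_add_distrib]
          refine sum_congr rfl fun γ1 _ => ?_
          rw [← Finset.sum_add_distrib, ← Finset.sum_add_distrib, ← Finset.sum_add_distrib]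
          refine sum_congr rfl fun γ2 _ => ?_
          rw [← Finset.sum_add_distrib, ← Finset.sum_add_distrib, ← Finset.sum_add_distrib]
          refine sum_congr rfl fun γ3 _ => ?_
          rw [← add_smul, ← add_smul, ← add_smul, keyD]

theorem pmerge {x : A} (m1 m2 : ℕ) (z : A) : x ^ m1 * (x ^ m2 * z) = x ^ (m1 + m2) * z := by
  rw [← mul_assoc, ← pow_add]

theorem collectC {a b c d : A} (hab : a * b = b * a) (hac : a * c = c * a)
    (hbc : b * c = c * b) (i1 k1 l1 i2 k2 l2 m2 : ℕ) (w : A) :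
    a ^ i1 * (b ^ k1 * (c ^ l1 * (a ^ i2 * (b ^ k2 * (c ^ l2 * (d ^ m2 * w)))))) =
      a ^ (i1 + i2) * (b ^ (k1 + k2) * (c ^ (l1 + l2) * (d ^ m2 * w))) := by
  rw [pswap hac.symm l1 i2, pswap hab.symm k1 i2, pmerge i1 i2,
    pswap hbc.symm l1 k2, pmerge k1 k2, pmerge l1 l2]

theorem collectB {a b c d : A} (hab : a * b = b * a) (i1 k1 i2 k2 l2 m2 : ℕ) (w : A) :
    a ^ i1 * (b ^ k1 * (a ^ i2 * (b ^ k2 * (c ^ l2 * (d ^ m2 * w))))) =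
      a ^ (i1 + i2) * (b ^ (k1 + k2) * (c ^ l2 * (d ^ m2 * w))) := by
  rw [pswap hab.symm k1 i2, pmerge i1 i2, pmerge k1 k2]

theorem collectP {a b c d : A} (hab : a * b = b * a) (hac : a * c = c * a)
    (had : a * d = d * a) (hbc : b * c = c * b) (hbd : b * d = d * b) (hcd : c * d = d * c)
    (i1 k1 l1 m1 i2 k2 l2 m2 : ℕ) (w : A) :
    a ^ i1 * (b ^ k1 * (c ^ l1 * (d ^ m1 * (a ^ i2 * (b ^ k2 * (c ^ l2 * (d ^ m2 * w))))))) =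
      a ^ (i1 + i2) * (b ^ (k1 + k2) * (c ^ (l1 + l2) * (d ^ (m1 + m2) * w))) := by
  rw [pswap had.symm m1 i2, pswap hac.symm l1 i2, pswap hab.symm k1 i2, pmerge i1 i2,
    pswap hbd.symm m1 k2, pswap hbc.symm l1 k2, pmerge k1 k2,
    pswap hcd.symm m1 l2, pmerge l1 l2, pmerge m1 m2]

theorem coreDE {a b c d e : A} (hab : a * b = b * a) (hae : a * e = e * a) (hbc : b * c = c * b)
    (hcd : c * d = d * c) (heb : e * b = b * e - a) (hec : e * c = c * e - b)
    (hed : e * d = d * e - c) (s t : ℕ) (M N : ℕ) (hM : M < N) :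
    e ^ M * (d ^ s * e ^ t) =
      ∑ γ1 ∈ range N, ∑ γ2 ∈ range N, ∑ γ3 ∈ range N,
        cD K M s γ1 γ2 γ3 •
          (a ^ γ3 * (b ^ γ2 * (c ^ γ1 *
            (d ^ (s - (γ1 + γ2 + γ3)) * e ^ ((M - (γ1 + 2 * γ2 + 3 * γ3)) + t))))) := by
  rw [← mul_assoc, lemD (K := K) hab hae hbc hcd heb hec hed s M N hM]
  simp only [Finset.sum_mul, smul_mul_assoc, mul_assoc, ← pow_add]

theorem coreCDE {a b c d e : A} (hab : a * b = b * a) (hae : a * e = e * a) (hbc : b * c = c * b)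
    (hcd : c * d = d * c) (heb : e * b = b * e - a) (hec : e * c = c * e - b)
    (hed : e * d = d * e - c) (r s t : ℕ) (M N : ℕ) (hM : M < N) :
    e ^ M * (c ^ r * (d ^ s * e ^ t)) =
      ∑ β1 ∈ range N, ∑ β2 ∈ range N, ∑ γ1 ∈ range N, ∑ γ2 ∈ range N, ∑ γ3 ∈ range N,
        (cC K M r β1 β2 * cD K (M - (β1 + 2 * β2)) s γ1 γ2 γ3) •
          (a ^ β2 * (b ^ β1 * (c ^ (r - (β1 + β2)) * (a ^ γ3 * (b ^ γ2 * (c ^ γ1 *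
            (d ^ (s - (γ1 + γ2 + γ3)) *
              e ^ ((M - (β1 + 2 * β2) - (γ1 + 2 * γ2 + 3 * γ3)) + t)))))))) := by
  rw [← mul_assoc, lemC (K := K) hab hae hbc heb hec r M N hM, Finset.sum_mul]
  refine sum_congr rfl fun β1 _ => ?_
  rw [Finset.sum_mul]
  refine sum_congr rfl fun β2 _ => ?_
  rw [smul_mul_assoc, mul_assoc, mul_assoc, mul_assoc,
    coreDE (K := K) hab hae hbc hcd heb hec hed s t (M - (β1 + 2 * β2)) N (by omega)]
  simp only [Finset.mul_sum, Finset.smul_sum, mul_smul_comm, smul_smul]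

theorem coreE {a b c d e : A} (hab : a * b = b * a) (hae : a * e = e * a) (hbc : b * c = c * b)
    (hcd : c * d = d * c) (heb : e * b = b * e - a) (hec : e * c = c * e - b)
    (hed : e * d = d * e - c) (q r s t : ℕ) (n N : ℕ) (hn : n < N) :
    e ^ n * (b ^ q * (c ^ r * (d ^ s * e ^ t))) =
      ∑ α ∈ range N, ∑ β1 ∈ range N, ∑ β2 ∈ range N,
        ∑ γ1 ∈ range N, ∑ γ2 ∈ range N, ∑ γ3 ∈ range N,
        (cB K n q α * cC K (n - α) r β1 β2 *
            cD K (n - α - (β1 + 2 * β2)) s γ1 γ2 γ3) •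
          (a ^ α * (b ^ (q - α) * (a ^ β2 * (b ^ β1 * (c ^ (r - (β1 + β2)) *
            (a ^ γ3 * (b ^ γ2 * (c ^ γ1 * (d ^ (s - (γ1 + γ2 + γ3)) *
              e ^ ((n - α - (β1 + 2 * β2) - (γ1 + 2 * γ2 + 3 * γ3)) + t)))))))))) := by
  rw [← mul_assoc, lemB (K := K) hab hae heb q n N hn, Finset.sum_mul]
  refine sum_congr rfl fun α _ => ?_
  rw [smul_mul_assoc, mul_assoc, mul_assoc,
    coreCDE (K := K) hab hae hbc hcd heb hec hed r s t (n - α) N (by omega)]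
  simp only [Finset.mul_sum, Finset.smul_sum, mul_smul_comm, smul_smul, mul_assoc]

set_option maxHeartbeats 1000000 in
theorem core {a b c d e : A}
    (hab : a * b = b * a) (hac : a * c = c * a) (had : a * d = d * a) (hae : a * e = e * a)
    (hbc : b * c = c * b) (hbd : b * d = d * b) (hcd : c * d = d * c)
    (heb : e * b = b * e - a) (hec : e * c = c * e - b) (hed : e * d = d * e - c)
    (j k l m n p q r s t : ℕ) (N : ℕ) (hn : n < N) :
    (a ^ j * b ^ k * c ^ l * d ^ m * e ^ n) * (a ^ p * b ^ q * c ^ r * d ^ s * e ^ t) =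
      ∑ α ∈ range N, ∑ β1 ∈ range N, ∑ β2 ∈ range N,
        ∑ γ1 ∈ range N, ∑ γ2 ∈ range N, ∑ γ3 ∈ range N,
        (cB K n q α * cC K (n - α) r β1 β2 *
            cD K (n - α - (β1 + 2 * β2)) s γ1 γ2 γ3) •
          (a ^ (j + (p + (α + (β2 + γ3)))) * (b ^ (k + ((q - α) + (β1 + γ2))) *
            (c ^ (l + ((r - (β1 + β2)) + γ1)) * (d ^ (m + (s - (γ1 + γ2 + γ3))) *
              e ^ ((n - α - (β1 + 2 * β2) - (γ1 + 2 * γ2 + 3 * γ3)) + t))))) := by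
  have h1 : (a ^ j * b ^ k * c ^ l * d ^ m * e ^ n) * (a ^ p * b ^ q * c ^ r * d ^ s * e ^ t) =
      a ^ j * (b ^ k * (c ^ l * (d ^ m * (a ^ p * (e ^ n * (b ^ q * (c ^ r * (d ^ s * e ^ t)))))))) := by
    simp only [mul_assoc]
    rw [pswap (show e * a = a * e from hae.symm) n p]
  rw [h1, coreE (K := K) hab hae hbc hcd heb hec hed q r s t n N hn]
  simp only [Finset.mul_sum, mul_smul_comm]
  refine sum_congr rfl fun α _ => sum_congr rfl fun β1 _ => sum_congr rfl fun β2 _ =>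
    sum_congr rfl fun γ1 _ => sum_congr rfl fun γ2 _ => sum_congr rfl fun γ3 _ => ?_
  congr 1
  rw [collectC hab hac hbc β2 β1 (r - (β1 + β2)) γ3 γ2 γ1 (s - (γ1 + γ2 + γ3)) _,
    collectB hab α (q - α) (β2 + γ3) (β1 + γ2) ((r - (β1 + β2)) + γ1) (s - (γ1 + γ2 + γ3)) _,
    pmerge p (α + (β2 + γ3)),
    collectP hab hac had hbc hbd hcd j k l m (p + (α + (β2 + γ3))) ((q - α) + (β1 + γ2))
      ((r - (β1 + β2)) + γ1) (s - (γ1 + γ2 + γ3)) _]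

theorem cB_vanish_q {q α : ℕ} (n : ℕ) (h : q < α) : cB K n q α = 0 := by
  simp [cB, Nat.descFactorial_eq_zero_iff_lt.2 h]

theorem cC_vanish_r {r β1 β2 : ℕ} (n : ℕ) (h : r < β1 + β2) : cC K n r β1 β2 = 0 := by
  simp [cC, Nat.descFactorial_eq_zero_iff_lt.2 h]

theorem cD_vanish_s {s γ1 γ2 γ3 : ℕ} (n : ℕ) (h : s < γ1 + γ2 + γ3) : cD K n s γ1 γ2 γ3 = 0 := by
  simp [cD, Nat.descFactorial_eq_zero_iff_lt.2 h]

set_option maxHeartbeats 2000000 in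
theorem coef_eq (n q r s α β1 β2 γ1 γ2 γ3 : ℕ) :
    cB K n q α * cC K (n - α) r β1 β2 * cD K (n - α - β1 - 2 * β2) s γ1 γ2 γ3 =
      (-1 : K) ^ (α + β1 + γ1 + γ3) *
        ((n.choose α * q.choose α * r.choose (β1 + β2) * (n - α).choose (β1 + 2 * β2)
          * (β1 + β2).choose β1 * s.choose (γ1 + γ2 + γ3)
          * (n - α - β1 - 2 * β2).choose (γ1 + 2 * γ2 + 3 * γ3)
          * α.factorial * (β1 + 2 * β2).factorial
          * (γ1 + γ2 + γ3).factorial * (γ1 + 2 * γ2 + 3 * γ3).factorial : ℕ) : K)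
        / ((2 ^ β2 * (Nat.factorial 2) ^ γ2 * (Nat.factorial 3) ^ γ3
            * γ3.factorial * γ2.factorial * γ1.factorial : ℕ) : K) := by
  have hne : ∀ x : ℕ, x ≠ 0 → ((x : ℕ) : K) ≠ 0 := fun x hx => Nat.cast_ne_zero.mpr hx
  have h1 : ((α.factorial : ℕ) : K) ≠ 0 := hne _ (Nat.factorial_ne_zero α)
  have h2 : (((2 ^ β2 * β1.factorial * β2.factorial : ℕ)) : K) ≠ 0 := by
    refine hne _ ?_
    refine Nat.mul_ne_zero (Nat.mul_ne_zero ?_ ?_) ?_ <;>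
      first
        | exact Nat.factorial_ne_zero _
        | exact pow_ne_zero _ (by omega)
  have h3 : (((2 ^ γ2 * 6 ^ γ3 * γ1.factorial * γ2.factorial * γ3.factorial : ℕ)) : K) ≠ 0 := by
    refine hne _ ?_
    refine Nat.mul_ne_zero (Nat.mul_ne_zero (Nat.mul_ne_zero (Nat.mul_ne_zero ?_ ?_) ?_) ?_) ?_ <;>
      first
        | exact Nat.factorial_ne_zero _
        | exact pow_ne_zero _ (by omega)
  have h4 : (((2 ^ β2 * 2 ^ γ2 * 6 ^ γ3
      * γ3.factorial * γ2.factorial * γ1.factorial : ℕ)) : K) ≠ 0 := by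
    refine hne _ ?_
    refine Nat.mul_ne_zero (Nat.mul_ne_zero (Nat.mul_ne_zero (Nat.mul_ne_zero
      (Nat.mul_ne_zero ?_ ?_) ?_) ?_) ?_) ?_ <;>
      first
        | exact Nat.factorial_ne_zero _
        | exact pow_ne_zero _ (by omega)
  have hsymm : (β1 + β2).choose β1 = (β1 + β2).choose β2 := by
    have h := Nat.choose_symm (show β1 ≤ β1 + β2 from by omega)
    rw [show β1 + β2 - β1 = β2 from by omega] at h
    exact h.symm
  simp only [cB, cC, cD]
  rw [Nat.descFactorial_eq_factorial_mul_choose q α,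
    Nat.descFactorial_eq_factorial_mul_choose n α,
    Nat.descFactorial_eq_factorial_mul_choose r (β1 + β2),
    Nat.descFactorial_eq_factorial_mul_choose (n - α) (β1 + 2 * β2),
    Nat.descFactorial_eq_factorial_mul_choose s (γ1 + γ2 + γ3),
    Nat.descFactorial_eq_factorial_mul_choose (n - α - β1 - 2 * β2) (γ1 + 2 * γ2 + 3 * γ3),
    ← Nat.add_choose_mul_factorial_mul_factorial β1 β2,
    show Nat.factorial 2 = 2 from rfl, show Nat.factorial 3 = 6 from rfl, hsymm]
  rw [div_mul_div_comm, div_mul_div_comm]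
  rw [div_eq_div_iff (mul_ne_zero (mul_ne_zero h1 h2) h3) h4]
  push_cast
  ring

end Alg

end Stmt15Aux

open Stmt15Aux Finset in
theorem stmt_15 {K : Type*} [Field K] [CharZero K]
    {L : Type*} [LieRing L] [LieAlgebra K L]
    (x1 x2 x3 x4 x5 : L)
    (h52 : ⁅x5, x2⁆ = -x1) (h53 : ⁅x5, x3⁆ = -x2) (h54 : ⁅x5, x4⁆ = -x3)
    (h12 : ⁅x1, x2⁆ = 0) (h13 : ⁅x1, x3⁆ = 0) (h14 : ⁅x1, x4⁆ = 0) (h15 : ⁅x1, x5⁆ = 0)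
    (h23 : ⁅x2, x3⁆ = 0) (h24 : ⁅x2, x4⁆ = 0) (h34 : ⁅x3, x4⁆ = 0)
    (j k l m n p q r s t : ℕ) :
    ((ι K x1 : UniversalEnvelopingAlgebra K L) ^ (j) * (ι K x2 : UniversalEnvelopingAlgebra K L) ^ (k) * (ι K x3 : UniversalEnvelopingAlgebra K L) ^ (l) * (ι K x4 : UniversalEnvelopingAlgebra K L) ^ (m) * (ι K x5 : UniversalEnvelopingAlgebra K L) ^ (n))
      * ((ι K x1 : UniversalEnvelopingAlgebra K L) ^ (p) * (ι K x2 : UniversalEnvelopingAlgebra K L) ^ (q) * (ι K x3 : UniversalEnvelopingAlgebra K L) ^ (r) * (ι K x4 : UniversalEnvelopingAlgebra K L) ^ (s) * (ι K x5 : UniversalEnvelopingAlgebra K L) ^ (t)) =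
      ∑ α ∈ Finset.range (min n q + 1),
      ∑ β1 ∈ Finset.range (r + 1), ∑ β2 ∈ Finset.range (r + 1),
        if β1 + β2 ≤ r ∧ β1 + 2 * β2 ≤ n - α then
          ∑ γ1 ∈ Finset.range (s + 1), ∑ γ2 ∈ Finset.range (s + 1), ∑ γ3 ∈ Finset.range (s + 1),
            if γ1 + γ2 + γ3 ≤ s ∧ γ1 + 2 * γ2 + 3 * γ3 ≤ n - α - β1 - 2 * β2 then
              ((-1 : K) ^ (α + β1 + γ1 + γ3) *
                ((n.choose α * q.choose α * r.choose (β1 + β2) * (n - α).choose (β1 + 2 * β2)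
                  * (β1 + β2).choose β1 * s.choose (γ1 + γ2 + γ3)
                  * (n - α - β1 - 2 * β2).choose (γ1 + 2 * γ2 + 3 * γ3)
                  * α.factorial * (β1 + 2 * β2).factorial
                  * (γ1 + γ2 + γ3).factorial * (γ1 + 2 * γ2 + 3 * γ3).factorial : ℕ) : K)
                / ((2 ^ β2 * (Nat.factorial 2) ^ γ2 * (Nat.factorial 3) ^ γ3
                    * γ3.factorial * γ2.factorial * γ1.factorial : ℕ) : K)) •
                ((ι K x1 : UniversalEnvelopingAlgebra K L) ^ (j + p + α + β2 + γ3) * (ι K x2 : UniversalEnvelopingAlgebra K L) ^ (k + q - α + β1 + γ2)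
                  * (ι K x3 : UniversalEnvelopingAlgebra K L) ^ (l + r - β1 - β2 + γ1) * (ι K x4 : UniversalEnvelopingAlgebra K L) ^ (m + s - γ1 - γ2 - γ3)
                  * (ι K x5 : UniversalEnvelopingAlgebra K L) ^ (n + t - α - β1 - 2 * β2 - γ1 - 2 * γ2 - 3 * γ3))
            else 0
        else 0 := by
  have hcomm : ∀ u v : L, ⁅u, v⁆ = 0 →
      (ι K u : UniversalEnvelopingAlgebra K L) * ι K v = ι K v * ι K u := by
    intro u v h
    letI : LieRing (UniversalEnvelopingAlgebra K L) := LieRing.ofAssociativeRing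
    have h1 : (⁅(ι K u : UniversalEnvelopingAlgebra K L), ι K v⁆) = ι K ⁅u, v⁆ :=
      ((ι K).map_lie u v).symm
    rw [h, map_zero, Ring.lie_def, sub_eq_zero] at h1
    exact h1
  have hstep : ∀ u v w : L, ⁅u, v⁆ = -w →
      (ι K u : UniversalEnvelopingAlgebra K L) * ι K v = ι K v * ι K u - ι K w := by
    intro u v w h
    letI : LieRing (UniversalEnvelopingAlgebra K L) := LieRing.ofAssociativeRing
    have h1 : (⁅(ι K u : UniversalEnvelopingAlgebra K L), ι K v⁆) = ι K ⁅u, v⁆ :=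
      ((ι K).map_lie u v).symm
    rw [h, map_neg, Ring.lie_def] at h1
    rw [sub_eq_iff_eq_add.mp h1]
    abel
  rw [core (K := K)
    (hcomm x1 x2 h12) (hcomm x1 x3 h13) (hcomm x1 x4 h14)
    (hcomm x1 x5 h15) (hcomm x2 x3 h23) (hcomm x2 x4 h24) (hcomm x3 x4 h34)
    (hstep x5 x2 x1 h52) (hstep x5 x3 x2 h53) (hstep x5 x4 x3 h54)
    j k l m n p q r s t (n + q + r + s + 2) (by omega)]
  refine Eq.trans (Finset.sum_congr rfl fun α hα => ?_)
    (Finset.sum_subset (Finset.range_subset_range.mpr (show min n q + 1 ≤ n + q + r + s + 2 from by omega)) ?_).symm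
  · refine Eq.trans (Finset.sum_congr rfl fun β1 hβ1 => ?_)
      (Finset.sum_subset (Finset.range_subset_range.mpr (show r + 1 ≤ n + q + r + s + 2 from by omega)) ?_).symm
    · refine Eq.trans (Finset.sum_congr rfl fun β2 hβ2 => ?_)
        (Finset.sum_subset (Finset.range_subset_range.mpr (show r + 1 ≤ n + q + r + s + 2 from by omega)) ?_).symm
      · by_cases hβ : β1 + β2 ≤ r ∧ β1 + 2 * β2 ≤ n - α
        · rw [if_pos hβ]
          refine Eq.trans (Finset.sum_congr rfl fun γ1 hγ1 => ?_)
            (Finset.sum_subset (Finset.range_subset_range.mpr (show s + 1 ≤ n + q + r + s + 2 from by omega)) ?_).symm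
          · refine Eq.trans (Finset.sum_congr rfl fun γ2 hγ2 => ?_)
              (Finset.sum_subset (Finset.range_subset_range.mpr (show s + 1 ≤ n + q + r + s + 2 from by omega)) ?_).symm
            · refine Eq.trans (Finset.sum_congr rfl fun γ3 hγ3 => ?_)
                (Finset.sum_subset (Finset.range_subset_range.mpr (show s + 1 ≤ n + q + r + s + 2 from by omega)) ?_).symm
              · by_cases hγ : γ1 + γ2 + γ3 ≤ s ∧ γ1 + 2 * γ2 + 3 * γ3 ≤ n - α - β1 - 2 * β2
                · rw [if_pos hγ]
                  by_cases hgood : α ≤ n ∧ α ≤ q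
                  · rw [show n - α - (β1 + 2 * β2) = n - α - β1 - 2 * β2 from by omega, coef_eq]
                    congr 1
                    rw [show j + (p + (α + (β2 + γ3))) = j + p + α + β2 + γ3 from by omega,
                      show k + ((q - α) + (β1 + γ2)) = k + q - α + β1 + γ2 from by omega,
                      show l + ((r - (β1 + β2)) + γ1) = l + r - β1 - β2 + γ1 from by omega,
                      show m + (s - (γ1 + γ2 + γ3)) = m + s - γ1 - γ2 - γ3 from by omega,
                      show (n - α - β1 - 2 * β2 - (γ1 + 2 * γ2 + 3 * γ3)) + t
                        = n + t - α - β1 - 2 * β2 - γ1 - 2 * γ2 - 3 * γ3 from by omega]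
                    simp only [mul_assoc]
                  · rcases (show n < α ∨ q < α from by omega) with h | h
                    · have hz : n.choose α = 0 := Nat.choose_eq_zero_of_lt h
                      rw [cB_vanish q h, zero_mul, zero_mul, zero_smul, hz]
                      simp
                    · have hz : q.choose α = 0 := Nat.choose_eq_zero_of_lt h
                      rw [cB_vanish_q n h, zero_mul, zero_mul, zero_smul, hz]
                      simp
                · rw [if_neg hγ]
                  rcases not_and_or.mp hγ with h | h
                  · rw [cD_vanish_s (n - α - (β1 + 2 * β2)) (by omega), mul_zero, zero_smul]
                  · rw [cD_vanish s (by omega), mul_zero, zero_smul]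
              · intro γ3 _ hγ3
                rw [Finset.mem_range, not_lt] at hγ3
                rw [if_neg (by omega)]
            · intro γ2 _ hγ2
              rw [Finset.mem_range, not_lt] at hγ2
              refine Finset.sum_eq_zero fun γ3 _ => ?_
              rw [if_neg (by omega)]
          · intro γ1 _ hγ1
            rw [Finset.mem_range, not_lt] at hγ1
            refine Finset.sum_eq_zero fun γ2 _ => Finset.sum_eq_zero fun γ3 _ => ?_
            rw [if_neg (by omega)]
        · rw [if_neg hβ]
          refine Finset.sum_eq_zero fun γ1 _ => Finset.sum_eq_zero fun γ2 _ =>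
            Finset.sum_eq_zero fun γ3 _ => ?_
          rcases not_and_or.mp hβ with h | h
          · rw [cC_vanish_r (n - α) (by omega), mul_zero, zero_mul, zero_smul]
          · rw [cC_vanish r (by omega), mul_zero, zero_mul, zero_smul]
      · intro β2 _ hβ2
        rw [Finset.mem_range, not_lt] at hβ2
        rw [if_neg (by omega)]
    · intro β1 _ hβ1
      rw [Finset.mem_range, not_lt] at hβ1
      refine Finset.sum_eq_zero fun β2 _ => ?_
      rw [if_neg (by omega)]
  · intro α _ hα
    rw [Finset.mem_range, not_lt] at hα
    refine Finset.sum_eq_zero fun β1 _ => Finset.sum_eq_zero fun β2 _ => ?_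
    by_cases hβ : β1 + β2 ≤ r ∧ β1 + 2 * β2 ≤ n - α
    · rw [if_pos hβ]
      refine Finset.sum_eq_zero fun γ1 _ => Finset.sum_eq_zero fun γ2 _ =>
        Finset.sum_eq_zero fun γ3 _ => ?_
      by_cases hγ : γ1 + γ2 + γ3 ≤ s ∧ γ1 + 2 * γ2 + 3 * γ3 ≤ n - α - β1 - 2 * β2
      · rw [if_pos hγ]
        rcases (show n < α ∨ q < α from by omega) with h | h
        · have hz : n.choose α = 0 := Nat.choose_eq_zero_of_lt h
          rw [hz]
          simp
        · have hz : q.choose α = 0 := Nat.choose_eq_zero_of_lt h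
          rw [hz]
          simp
      · rw [if_neg hγ]
    · rw [if_neg hβ]
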